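/- arXiv:1807.05663 — 2 statements merged into one kernel-verified Lean document; each statement's English description precedes it below -/
import Mathlib

section
/- For every α ∈ [0,1], the vertical half-line P := {(0, t) ∈ ℝ² : t ≥ 0} is α-sliding minimal (with n = 2, d = 1) in the half-plane ℝ²₊ with sliding boundary Γ. -/
open MeasureTheory Set

noncomputable section

/-- The functional `J_α(E) = H^d(E \ Γ) + α · H^d(E ∩ Γ)`. -/
def slidingJ (n : ℕ) (d α : ℝ) (G E : Set (EuclideanSpace ℝ (Fin n))) : ENNReal :=
  μH[d] (E \ G) + ENNReal.ofReal α * μH[d] (E ∩ G)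

/-- `F` is a sliding competitor of `E` in `Ω` with sliding boundary `G`:
`F = φ₁(E)` for a continuous one-parameter family `φ : [0,1] × E → Ω` with `φ₀ = id`,
`φ₁` Lipschitz, preserving `G`, and whose moving part is confined to a compact set. -/
def IsSlidingCompetitor (n : ℕ) (Ω G E F : Set (EuclideanSpace ℝ (Fin n))) : Prop :=
  ∃ φ : ℝ → EuclideanSpace ℝ (Fin n) → EuclideanSpace ℝ (Fin n),
    ContinuousOn (fun q : ℝ × EuclideanSpace ℝ (Fin n) => φ q.1 q.2) (Icc (0:ℝ) 1 ×ˢ E) ∧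
    (∀ x ∈ E, φ 0 x = x) ∧
    (∃ L : NNReal, LipschitzOnWith L (φ 1) E) ∧
    (∀ t ∈ Icc (0:ℝ) 1, ∀ x ∈ E, φ t x ∈ Ω) ∧
    (∀ t ∈ Icc (0:ℝ) 1, ∀ x ∈ E ∩ G, φ t x ∈ G) ∧
    (∃ K : Set (EuclideanSpace ℝ (Fin n)), IsCompact K ∧
       ∀ t ∈ Icc (0:ℝ) 1, ∀ x ∈ E, (∃ s ∈ Icc (0:ℝ) 1, φ s x ≠ x) → φ t x ∈ K) ∧
    F = φ 1 '' E

/-- `E ⊆ Ω` is `α`-sliding minimal of dimension `d` in `Ω` with sliding boundary `G`: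
`J_α(E \ F) ≤ J_α(F \ E)` for every sliding competitor `F` of `E`. -/
def SlidingMinimal (n : ℕ) (d α : ℝ) (Ω G E : Set (EuclideanSpace ℝ (Fin n))) : Prop :=
  ∀ F : Set (EuclideanSpace ℝ (Fin n)), IsSlidingCompetitor n Ω G E F →
    slidingJ n d α G (E \ F) ≤ slidingJ n d α G (F \ E)

/-- The cone over a set: `cone(A) = {λ a : λ ≥ 0, a ∈ A}`. -/
def coneOver (n : ℕ) (A : Set (EuclideanSpace ℝ (Fin n))) : Set (EuclideanSpace ℝ (Fin n)) :=
  {x | ∃ lam : ℝ, 0 ≤ lam ∧ ∃ a ∈ A, x = lam • a}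

/-- The point of `ℝ²` with coordinates `(a, b)`. -/
def e2 (a b : ℝ) : EuclideanSpace ℝ (Fin 2) := (EuclideanSpace.equiv (Fin 2) ℝ).symm ![a, b]

/-- The sliding boundary `Γ = {y = 0}` of the half-plane. -/
def Gamma2 : Set (EuclideanSpace ℝ (Fin 2)) := {x | x 1 = 0}

/-- The closed upper half-plane `ℝ²₊ = {y ≥ 0}`. -/
def halfPlane : Set (EuclideanSpace ℝ (Fin 2)) := {x | 0 ≤ x 1}

/-- The vertical half-line `P = {(0, t) : t ≥ 0}`. -/
def vertHalfLine : Set (EuclideanSpace ℝ (Fin 2)) := {p | ∃ t : ℝ, 0 ≤ t ∧ p = e2 0 t}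

/-- The cone of type (iv): the union of the half-line `{(t,0) : t ≤ 0}` lying on `Γ`
with the half-line from the origin making angle `θ_α = arccos α` with `Γ`. -/
def Dcone (α : ℝ) : Set (EuclideanSpace ℝ (Fin 2)) :=
  {p | ∃ t : ℝ, t ≤ 0 ∧ p = e2 t 0} ∪
  {p | ∃ t : ℝ, 0 ≤ t ∧ p = t • e2 (Real.cos (Real.arccos α)) (Real.sin (Real.arccos α))}

/-- The cone `V_θ`: two half-lines from the origin, symmetric with respect to the
vertical axis, each making angle `θ` with `Γ`. -/
def Vcone (θ : ℝ) : Set (EuclideanSpace ℝ (Fin 2)) :=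
  {p | ∃ t : ℝ, 0 ≤ t ∧ p = t • e2 (Real.cos θ) (Real.sin θ)} ∪
  {p | ∃ t : ℝ, 0 ≤ t ∧ p = t • e2 (-Real.cos θ) (Real.sin θ)}

/-- The reflection `(x, y) ↦ (−x, y)`. -/
def refl2 (p : EuclideanSpace ℝ (Fin 2)) : EuclideanSpace ℝ (Fin 2) :=
  e2 (-(p 0)) (p 1)

lemma e2_fst (a b : ℝ) : e2 a b 0 = a := rfl

lemma e2_snd (a b : ℝ) : e2 a b 1 = b := rfl

lemma isometry_vert : Isometry (fun t : ℝ => e2 0 t) := by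
  apply Isometry.of_dist_eq
  intro s t
  rw [EuclideanSpace.dist_eq, Fin.sum_univ_two]
  show √(dist (0:ℝ) 0 ^ 2 + dist s t ^ 2) = dist s t
  rw [dist_self]
  simp [Real.sqrt_sq dist_nonneg]

lemma lipschitz_snd : LipschitzWith 1 (fun x : EuclideanSpace ℝ (Fin 2) => x 1) := by
  apply LipschitzWith.of_dist_le_mul
  intro x y
  rw [NNReal.coe_one, one_mul, EuclideanSpace.dist_eq, Fin.sum_univ_two]
  calc dist (x 1) (y 1) = √(dist (x 1) (y 1) ^ 2) := (Real.sqrt_sq dist_nonneg).symm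
    _ ≤ √(dist (x 0) (y 0) ^ 2 + dist (x 1) (y 1) ^ 2) :=
        Real.sqrt_le_sqrt (le_add_of_nonneg_left (sq_nonneg _))

lemma hausdorff_singleton_plane (x : EuclideanSpace ℝ (Fin 2)) :
    μH[1] ({x} : Set (EuclideanSpace ℝ (Fin 2))) = 0 := by
  haveI := MeasureTheory.Measure.noAtoms_hausdorff (X := EuclideanSpace ℝ (Fin 2)) (d := 1) one_pos
  exact measure_singleton _

/-- For every `α ∈ [0,1]`, the vertical half-line `P = {(0,t) : t ≥ 0}` is `α`-sliding
minimal (n = 2, d = 1) in the half-plane `ℝ²₊` with sliding boundary `Γ`. -/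
theorem vertHalfLine_slidingMinimal (α : ℝ) (hα : α ∈ Icc (0:ℝ) 1) :
    SlidingMinimal 2 1 α halfPlane Gamma2 vertHalfLine := by
  intro F hF
  obtain ⟨φ, hcont, hφ0, ⟨L, hLip⟩, hΩ, hΓ, ⟨K, hK, hKmov⟩, hFeq⟩ := hF
  set ι : ℝ → EuclideanSpace ℝ (Fin 2) := fun t => e2 0 t with hιdef
  have hmemP : ∀ t : ℝ, 0 ≤ t → ι t ∈ vertHalfLine := fun t ht => ⟨t, ht, rfl⟩
  have hPcoord : ∀ p ∈ vertHalfLine, p = ι (p 1) := by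
    rintro p ⟨t, ht, rfl⟩
    simp [hιdef, e2_snd]
  -- points far out on the half-line are fixed by `φ 1`
  obtain ⟨R₀, hR₀⟩ := hK.isBounded.subset_closedBall 0
  set R : ℝ := max R₀ 0 with hRdef
  have hnormι : ∀ t : ℝ, 0 ≤ t → ‖ι t‖ = t := by
    intro t ht
    rw [EuclideanSpace.norm_eq, Fin.sum_univ_two]
    show √(‖(0:ℝ)‖ ^ 2 + ‖t‖ ^ 2) = t
    rw [norm_zero, Real.norm_eq_abs, sq_abs]
    simpa using Real.sqrt_eq_iff_eq_sq (by positivity) ht |>.mpr (by ring) 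
  have hfar : ∀ t : ℝ, R < t → ι t ∈ F := by
    intro t hRt
    have ht0 : 0 ≤ t := le_of_lt (lt_of_le_of_lt (le_max_right R₀ 0) hRt)
    have hx : ι t ∈ vertHalfLine := hmemP t ht0
    have hnotK : ι t ∉ K := by
      intro hmem
      have := hR₀ hmem
      rw [Metric.mem_closedBall, dist_zero_right, hnormι t ht0] at this
      exact absurd this (not_le.mpr (lt_of_le_of_lt (le_max_left R₀ 0) hRt))
    have hfix : φ 1 (ι t) = ι t := by
      by_contra hne
      exact hnotK (by
        have h0 : φ 0 (ι t) ∈ K :=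
          hKmov 0 ⟨le_rfl, zero_le_one⟩ (ι t) hx ⟨1, ⟨zero_le_one, le_rfl⟩, hne⟩
        rwa [hφ0 (ι t) hx] at h0)
    rw [hFeq]
    exact ⟨ι t, hx, hfix⟩
  -- F is connected
  have hPim : vertHalfLine = ι '' Ici 0 := by
    ext p
    constructor
    · rintro ⟨t, ht, rfl⟩; exact ⟨t, ht, rfl⟩
    · rintro ⟨t, ht, rfl⟩; exact ⟨t, ht, rfl⟩
  have hPconn : IsConnected vertHalfLine := by
    rw [hPim]
    exact (isConnected_Ici).image ι isometry_vert.continuous.continuousOn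
  have hFconn : IsConnected F := by
    rw [hFeq]
    exact hPconn.image (φ 1) hLip.continuousOn
  set π : EuclideanSpace ℝ (Fin 2) → ℝ := fun x => x 1 with hπdef
  have hπF : IsConnected (π '' F) :=
    hFconn.image π lipschitz_snd.continuous.continuousOn
  have h0P : ι 0 ∈ vertHalfLine := hmemP 0 le_rfl
  have h0πF : (0:ℝ) ∈ π '' F := by
    refine ⟨φ 1 (ι 0), ?_, ?_⟩
    · rw [hFeq]; exact mem_image_of_mem _ h0P
    · exact hΓ 1 ⟨zero_le_one, le_rfl⟩ (ι 0) ⟨h0P, rfl⟩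
  have hIci : Ici (0:ℝ) ⊆ π '' F := by
    intro t ht
    have hT : ι (max t (R+1)) ∈ F :=
      hfar _ (lt_of_lt_of_le (lt_add_one R) (le_max_right _ _))
    have hTπ : max t (R+1) ∈ π '' F := ⟨ι (max t (R+1)), hT, e2_snd _ _⟩
    exact hπF.isPreconnected.ordConnected.out h0πF hTπ ⟨ht, le_max_left _ _⟩
  -- the missing part of P, seen on the real line
  set S : Set ℝ := {t : ℝ | 0 ≤ t ∧ ι t ∉ F} with hSdef
  have hPF : vertHalfLine \ F ⊆ ι '' S := by
    rintro p ⟨⟨t, ht, rfl⟩, hpF⟩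
    exact ⟨t, ⟨ht, hpF⟩, rfl⟩
  have hSsub : S \ {0} ⊆ π '' ((F \ vertHalfLine) \ Gamma2) := by
    rintro t ⟨⟨ht0, htF⟩, htne⟩
    obtain ⟨y, hyF, hyt⟩ := hIci ht0
    refine ⟨y, ⟨⟨hyF, ?_⟩, ?_⟩, hyt⟩
    · intro hyP
      have := hPcoord y hyP
      rw [show y 1 = t from hyt] at this
      exact htF (this ▸ hyF)
    · intro hyΓ
      exact htne (by rw [← hyt]; exact hyΓ)
  -- measure computations
  have him1 : μH[1] (ι '' S) ≤ μH[1] S := by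
    have := isometry_vert.lipschitz.hausdorffMeasure_image_le zero_le_one S
    simpa using this
  have him2 : μH[1] (π '' ((F \ vertHalfLine) \ Gamma2)) ≤
      μH[1] ((F \ vertHalfLine) \ Gamma2) := by
    have := lipschitz_snd.hausdorffMeasure_image_le zero_le_one
      ((F \ vertHalfLine) \ Gamma2)
    simpa using this
  have hS0 : μH[1] S ≤ μH[1] (S \ {0}) := by
    calc μH[1] S ≤ μH[1] ((S \ {0}) ∪ {0}) :=
          measure_mono (fun x hx => by
            by_cases h : x = 0
            · exact Or.inr h
            · exact Or.inl ⟨hx, h⟩)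
      _ ≤ μH[1] (S \ {0}) + μH[1] ({(0:ℝ)} : Set ℝ) := measure_union_le _ _
      _ = μH[1] (S \ {0}) := by
          rw [MeasureTheory.hausdorffMeasure_real, measure_singleton, add_zero]
  have hmain : μH[1] (vertHalfLine \ F) ≤ μH[1] ((F \ vertHalfLine) \ Gamma2) :=
    calc μH[1] (vertHalfLine \ F) ≤ μH[1] (ι '' S) := measure_mono hPF
      _ ≤ μH[1] S := him1
      _ ≤ μH[1] (S \ {0}) := hS0
      _ ≤ μH[1] (π '' ((F \ vertHalfLine) \ Gamma2)) := measure_mono hSsub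
      _ ≤ μH[1] ((F \ vertHalfLine) \ Gamma2) := him2
  -- the boundary part of P \ F is a single point
  have hbd : μH[1] ((vertHalfLine \ F) ∩ Gamma2) = 0 := by
    have hsub : (vertHalfLine \ F) ∩ Gamma2 ⊆ {ι 0} := by
      rintro p ⟨⟨hpP, _⟩, hpΓ⟩
      have := hPcoord p hpP
      rw [show p 1 = 0 from hpΓ] at this
      exact this
    exact le_antisymm
      (le_trans (measure_mono hsub) (le_of_eq (hausdorff_singleton_plane _)))
      zero_le
  -- conclusion
  unfold slidingJ
  rw [hbd, mul_zero, add_zero]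
  calc μH[1] ((vertHalfLine \ F) \ Gamma2)
      ≤ μH[1] (vertHalfLine \ F) := measure_mono diff_subset
    _ ≤ μH[1] ((F \ vertHalfLine) \ Gamma2) := hmain
    _ ≤ _ := le_self_add
end
end

section
/- Let α ∈ (0,1) and θ_α := arccos α. The cone C := {(t, 0) : t ≤ 0} ∪ {t·(cos θ_α, sin θ_α) : t ≥ 0} (the union of a horizontal half-line lying on Γ with a half-line making angle θ_α with Γ) is α-sliding minimal (with n = 2, d = 1) in the half-plane ℝ²₊ with sliding boundary Γ. -/
open MeasureTheory Set

noncomputable section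

namespace DconeProof

lemma e2_zero (a b : ℝ) : e2 a b 0 = a := rfl

lemma e2_one (a b : ℝ) : e2 a b 1 = b := rfl

lemma smul_e2 (t a b : ℝ) : t • e2 a b = e2 (t*a) (t*b) := by
  ext i; fin_cases i <;> simp [e2]

lemma smul_apply (t : ℝ) (p : EuclideanSpace ℝ (Fin 2)) (i : Fin 2) : (t • p) i = t * p i := rfl

lemma norm_e2 (a b : ℝ) : ‖e2 a b‖ = Real.sqrt (a^2 + b^2) := by
  rw [EuclideanSpace.norm_eq]; simp [e2, Fin.sum_univ_two]

lemma dist_e2 (p q : EuclideanSpace ℝ (Fin 2)) :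
    dist p q = Real.sqrt ((p 0 - q 0)^2 + (p 1 - q 1)^2) := by
  rw [EuclideanSpace.dist_eq]; simp [Fin.sum_univ_two, Real.dist_eq, sq_abs]

lemma isometry_ray {c s : ℝ} (h1 : c^2 + s^2 = 1) : Isometry (fun t : ℝ => t • e2 c s) := by
  apply Isometry.of_dist_eq
  intro x y
  have hn : ‖e2 c s‖ = 1 := by rw [norm_e2, h1, Real.sqrt_one]
  simp only [dist_eq_norm, ← sub_smul, norm_smul, hn, mul_one, Real.norm_eq_abs]

lemma measure_ray_image {c s : ℝ} (h1 : c^2 + s^2 = 1) (S : Set ℝ) :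
    μH[(1:ℝ)] ((fun t : ℝ => t • e2 c s) '' S) = volume S := by
  rw [(isometry_ray h1).hausdorffMeasure_image (Or.inl zero_le_one), hausdorffMeasure_real]

lemma slidingJ_mono {n : ℕ} {d αr : ℝ} {G A B : Set (EuclideanSpace ℝ (Fin n))} (h : A ⊆ B) :
    slidingJ n d αr G A ≤ slidingJ n d αr G B :=
  add_le_add (measure_mono (diff_subset_diff_left h))
    (mul_le_mul_right (measure_mono (inter_subset_inter_left G h)) _)

lemma slidingJ_union_le {n : ℕ} {d αr : ℝ} {G : Set (EuclideanSpace ℝ (Fin n))}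
    (A B : Set (EuclideanSpace ℝ (Fin n))) :
    slidingJ n d αr G (A ∪ B) ≤ slidingJ n d αr G A + slidingJ n d αr G B := by
  unfold slidingJ
  rw [union_diff_distrib, union_inter_distrib_right]
  calc μH[d] (A \ G ∪ B \ G) + ENNReal.ofReal αr * μH[d] (A ∩ G ∪ B ∩ G)
      ≤ (μH[d] (A \ G) + μH[d] (B \ G)) +
        ENNReal.ofReal αr * (μH[d] (A ∩ G) + μH[d] (B ∩ G)) :=
        add_le_add (measure_union_le _ _) (mul_le_mul_right (measure_union_le _ _) _)
    _ = _ := by ring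

lemma slidingJ_inter_add_diff {n : ℕ} {d αr : ℝ} {G : Set (EuclideanSpace ℝ (Fin n))}
    (A : Set (EuclideanSpace ℝ (Fin n))) {T : Set (EuclideanSpace ℝ (Fin n))}
    (hT : MeasurableSet T) :
    slidingJ n d αr G (A ∩ T) + slidingJ n d αr G (A \ T) = slidingJ n d αr G A := by
  unfold slidingJ
  have h1 : (A ∩ T) \ G = (A \ G) ∩ T := by ext x; simp only [mem_diff, mem_inter_iff]; tauto
  have h2 : (A \ T) \ G = (A \ G) \ T := by ext x; simp only [mem_diff]; tauto
  have h3 : (A ∩ T) ∩ G = (A ∩ G) ∩ T := by ext x; simp only [mem_inter_iff]; tauto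
  have h4 : (A \ T) ∩ G = (A ∩ G) \ T := by ext x; simp only [mem_diff, mem_inter_iff]; tauto
  rw [h1, h2, h3, h4, ← measure_inter_add_diff (A \ G) hT, ← measure_inter_add_diff (A ∩ G) hT]
  ring

end DconeProof

set_option maxHeartbeats 1000000 in
open DconeProof in
/-- For `α ∈ (0,1)` and `θ_α = arccos α`, the cone consisting of the horizontal half-line
`{(t,0) : t ≤ 0}` lying on `Γ` together with the half-line making angle `θ_α` with `Γ`
is `α`-sliding minimal (n = 2, d = 1) in the half-plane `ℝ²₊` with sliding boundary `Γ`. -/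
theorem Dcone_slidingMinimal (α : ℝ) (hα : α ∈ Ioo (0:ℝ) 1) :
    SlidingMinimal 2 1 α halfPlane Gamma2 (Dcone α) := by
  obtain ⟨hα0, hα1⟩ := hα
  set s : ℝ := Real.sin (Real.arccos α) with hs_def
  have hcα : Real.cos (Real.arccos α) = α := Real.cos_arccos (by linarith) hα1.le
  have hs_eq : s = Real.sqrt (1 - α^2) := by rw [hs_def, Real.sin_arccos]
  have hs0 : 0 < s := by
    rw [hs_eq]; apply Real.sqrt_pos.2; nlinarith
  have h1 : α^2 + s^2 = 1 := by
    rw [hs_eq, Real.sq_sqrt (by nlinarith)]; ring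
  have h1' : (1:ℝ)^2 + (0:ℝ)^2 = 1 := by norm_num
  set u₁ : EuclideanSpace ℝ (Fin 2) := e2 1 0 with hu₁
  set u₂ : EuclideanSpace ℝ (Fin 2) := e2 α s with hu₂
  -- description of the cone as union of two rays
  have hE_eq : Dcone α = ((fun t : ℝ => t • u₁) '' Iic 0) ∪ ((fun t : ℝ => t • u₂) '' Ici 0) := by
    unfold Dcone
    rw [hcα, ← hs_def, ← hu₂]
    ext p
    simp only [mem_union, mem_setOf_eq, mem_image, mem_Iic, mem_Ici]
    constructor
    · rintro (⟨t, ht, rfl⟩ | ⟨t, ht, rfl⟩)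
      · exact Or.inl ⟨t, ht, by rw [hu₁, smul_e2]; norm_num⟩
      · exact Or.inr ⟨t, ht, rfl⟩
    · rintro (⟨t, ht, rfl⟩ | ⟨t, ht, rfl⟩)
      · exact Or.inl ⟨t, ht, by rw [hu₁, smul_e2]; norm_num⟩
      · exact Or.inr ⟨t, ht, rfl⟩
  intro F hF
  obtain ⟨φ, hφcont, hφ0, ⟨L, hφlip⟩, hφΩ, hφΓ, ⟨K, hK, hKmove⟩, hF_eq⟩ := hF
  have h0mem : (0:ℝ) ∈ Icc (0:ℝ) 1 := ⟨le_refl 0, zero_le_one⟩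
  have h1mem : (1:ℝ) ∈ Icc (0:ℝ) 1 := ⟨zero_le_one, le_refl 1⟩
  -- points outside K are fixed by φ 1
  have hfix : ∀ x ∈ Dcone α, x ∉ K → φ 1 x = x := by
    intro x hx hxK
    by_contra h
    exact hxK (by simpa [hφ0 x hx] using hKmove 0 h0mem x hx ⟨1, h1mem, h⟩)
  obtain ⟨R, hR0, hKR⟩ := hK.isBounded.subset_ball_lt 0 0
  set B : Set (EuclideanSpace ℝ (Fin 2)) := Metric.closedBall 0 R with hB
  have hKB : K ⊆ B := hKR.trans Metric.ball_subset_closedBall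
  have hEF : ∀ x ∈ Dcone α, x ∉ K → x ∈ F := by
    intro x hx hxK
    rw [hF_eq]
    exact ⟨x, hx, hfix x hx hxK⟩
  have hEdiffF : Dcone α \ F ⊆ K := by
    rintro x ⟨hxE, hxF⟩
    by_contra hxK
    exact hxF (hEF x hxE hxK)
  have hFdiffE : F \ Dcone α ⊆ K := by
    rintro y ⟨hyF, hyE⟩
    rw [hF_eq] at hyF
    obtain ⟨x, hx, rfl⟩ := hyF
    have h : φ 1 x ≠ x := fun h => hyE (Set.mem_of_eq_of_mem h hx)
    exact hKmove 1 h1mem x hx ⟨1, h1mem, h⟩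
  have hFoutside : ∀ y ∈ F, y ∉ B → y ∈ Dcone α := by
    intro y hyF hyB
    rw [hF_eq] at hyF
    obtain ⟨x, hx, rfl⟩ := hyF
    by_cases h : φ 1 x = x
    · exact Set.mem_of_eq_of_mem h hx
    · exact absurd (hKB (hKmove 1 h1mem x hx ⟨1, h1mem, h⟩)) hyB
  -- the calibration function
  set ell : EuclideanSpace ℝ (Fin 2) → ℝ := fun p => α * p 0 + s * p 1 with hell
  have hell_cont : Continuous ell :=
    (continuous_const.mul (EuclideanSpace.proj (0 : Fin 2)).continuous).add
      (continuous_const.mul (EuclideanSpace.proj (1 : Fin 2)).continuous)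
  have hell_lip : LipschitzWith 1 ell := by
    apply LipschitzWith.of_dist_le_mul
    intro p q
    rw [NNReal.coe_one, one_mul, Real.dist_eq, dist_e2]
    have he : ell p - ell q = α * (p 0 - q 0) + s * (p 1 - q 1) := by simp only [hell]; ring
    rw [he]
    have h2 : (α * (p 0 - q 0) + s * (p 1 - q 1))^2 ≤ (p 0 - q 0)^2 + (p 1 - q 1)^2 := by
      nlinarith [sq_nonneg (α * (p 1 - q 1) - s * (p 0 - q 0))]
    calc |α * (p 0 - q 0) + s * (p 1 - q 1)|
        = Real.sqrt ((α * (p 0 - q 0) + s * (p 1 - q 1))^2) := (Real.sqrt_sq_eq_abs _).symm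
      _ ≤ _ := Real.sqrt_le_sqrt h2
  have hell_lipΓ : ∀ S ⊆ Gamma2, LipschitzOnWith α.toNNReal ell S := by
    intro S hS
    apply LipschitzOnWith.of_dist_le_mul
    intro p hp q hq
    have hp1 : p 1 = 0 := hS hp
    have hq1 : q 1 = 0 := hS hq
    have he : ell p - ell q = α * (p 0 - q 0) := by simp only [hell, hp1, hq1]; ring
    rw [Real.dist_eq, he, dist_e2, hp1, hq1]
    have : Real.sqrt ((p 0 - q 0)^2 + (0 - 0)^2) = |p 0 - q 0| := by
      rw [sub_zero]; norm_num [Real.sqrt_sq_eq_abs]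
    rw [this, abs_mul, abs_of_nonneg hα0.le, Real.coe_toNNReal α hα0.le]
  -- connectivity
  have hcont1 : Continuous (fun t : ℝ => t • u₁) := continuous_id.smul continuous_const
  have hcont2 : Continuous (fun t : ℝ => t • u₂) := continuous_id.smul continuous_const
  have hEconn : IsConnected (Dcone α) := by
    rw [hE_eq]
    apply IsConnected.union
    · exact ⟨0, ⟨0, self_mem_Iic, zero_smul ℝ u₁⟩, ⟨0, self_mem_Ici, zero_smul ℝ u₂⟩⟩
    · exact (IsConnected.image ⟨⟨0, self_mem_Iic⟩, isPreconnected_Iic⟩ _ hcont1.continuousOn)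
    · exact (IsConnected.image ⟨⟨0, self_mem_Ici⟩, isPreconnected_Ici⟩ _ hcont2.continuousOn)
  have hφ1cont : ContinuousOn (φ 1) (Dcone α) := hφlip.continuousOn
  have hFconn : IsConnected F := hF_eq ▸ hEconn.image _ hφ1cont
  -- endpoints
  have hnorm_u₁ : ‖u₁‖ = 1 := by rw [hu₁, norm_e2]; norm_num
  have hnorm_u₂ : ‖u₂‖ = 1 := by rw [hu₂, norm_e2, h1, Real.sqrt_one]
  set aP : EuclideanSpace ℝ (Fin 2) := (-R) • u₁ with haP
  set bP : EuclideanSpace ℝ (Fin 2) := R • u₂ with hbP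
  have haE : aP ∈ Dcone α := by
    rw [hE_eq]; exact Or.inl ⟨-R, by simp [hR0.le], rfl⟩
  have hbE : bP ∈ Dcone α := by
    rw [hE_eq]; exact Or.inr ⟨R, hR0.le, rfl⟩
  have ha_norm : ‖aP‖ = R := by
    rw [haP, norm_smul, hnorm_u₁, mul_one, Real.norm_eq_abs, abs_neg, abs_of_pos hR0]
  have hb_norm : ‖bP‖ = R := by
    rw [hbP, norm_smul, hnorm_u₂, mul_one, Real.norm_eq_abs, abs_of_pos hR0]
  have haK : aP ∉ K := fun h => by
    have := Metric.mem_ball.1 (hKR h); rw [dist_zero_right, ha_norm] at this; linarith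
  have hbK : bP ∉ K := fun h => by
    have := Metric.mem_ball.1 (hKR h); rw [dist_zero_right, hb_norm] at this; linarith
  have haF : aP ∈ F := hEF aP haE haK
  have hbF : bP ∈ F := hEF bP hbE hbK
  have hella : ell aP = -(α * R) := by
    rw [haP, hu₁, smul_e2]
    simp only [hell, e2_zero, e2_one]; ring
  have hellb : ell bP = R := by
    rw [hbP, hu₂, smul_e2]
    simp only [hell, e2_zero, e2_one]
    nlinarith [h1]
  -- the interval is covered by ell '' (F ∩ B)
  have hIccsub : Icc (-(α * R)) R ⊆ ell '' (F ∩ B) := by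
    have hpre : IsPreconnected (ell '' F) :=
      (hFconn.image ell hell_cont.continuousOn).isPreconnected
    have h0 : Icc (-(α * R)) R ⊆ ell '' F :=
      hpre.Icc_subset ⟨aP, haF, hella⟩ ⟨bP, hbF, hellb⟩
    intro c hc
    obtain ⟨p, hpF, hpc⟩ := h0 hc
    by_cases hpB : p ∈ B
    · exact ⟨p, ⟨hpF, hpB⟩, hpc⟩
    exfalso
    have hpE : p ∈ Dcone α := hFoutside p hpF hpB
    have hpnorm : R < ‖p‖ := by
      by_contra h
      exact hpB (Metric.mem_closedBall.2 (by rw [dist_zero_right]; linarith))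
    rw [hE_eq] at hpE
    rcases hpE with ⟨t, ht, rfl⟩ | ⟨t, ht, rfl⟩
    · rw [norm_smul, hnorm_u₁, mul_one, Real.norm_eq_abs, abs_of_nonpos ht] at hpnorm
      have htR : t < -R := by linarith
      have : ell (t • u₁) = α * t := by
        rw [hu₁, smul_e2]; simp only [hell, e2_zero, e2_one]; ring
      rw [this] at hpc
      have : α * t < -(α * R) := by nlinarith
      rw [hpc] at this
      exact absurd hc.1 (not_le.2 this)
    · rw [norm_smul, hnorm_u₂, mul_one, Real.norm_eq_abs, abs_of_nonneg ht] at hpnorm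
      have : ell (t • u₂) = t := by
        rw [hu₂, smul_e2]; simp only [hell, e2_zero, e2_one]; nlinarith [h1]
      rw [this] at hpc
      rw [hpc] at hpnorm
      exact absurd hc.2 (not_le.2 hpnorm)
  -- measurability
  have hEclosed : IsClosed (Dcone α) := by
    rw [hE_eq]
    exact (((isometry_ray h1').isClosedEmbedding.isClosedMap _ isClosed_Iic)).union
      (((isometry_ray h1).isClosedEmbedding.isClosedMap _ isClosed_Ici))
  have hFmeas : MeasurableSet F := by
    have hFun : F = ⋃ n : ℕ, φ 1 '' (Dcone α ∩ Metric.closedBall 0 n) := by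
      rw [hF_eq]
      ext y
      simp only [mem_iUnion, mem_image]
      constructor
      · rintro ⟨x, hx, rfl⟩
        exact ⟨⌈‖x‖⌉₊, x, ⟨hx, Metric.mem_closedBall.2 (by
          rw [dist_zero_right]; exact Nat.le_ceil _)⟩, rfl⟩
      · rintro ⟨n, x, ⟨hx, _⟩, rfl⟩
        exact ⟨x, hx, rfl⟩
    rw [hFun]
    refine MeasurableSet.iUnion fun n => ?_
    exact (((isCompact_closedBall _ _).inter_left hEclosed).image_of_continuousOn
      (hφ1cont.mono inter_subset_left)).isClosed.measurableSet
  -- computation of E ∩ B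
  have hEBΓ : Dcone α ∩ B ∩ Gamma2 = (fun t : ℝ => t • u₁) '' Icc (-R) 0 := by
    ext p
    simp only [mem_inter_iff, mem_image, mem_Icc]
    constructor
    · rintro ⟨⟨hpE, hpB⟩, hpΓ⟩
      rw [hE_eq] at hpE
      have hpnorm : ‖p‖ ≤ R := by
        have := Metric.mem_closedBall.1 hpB; rwa [dist_zero_right] at this
      rcases hpE with ⟨t, ht, rfl⟩ | ⟨t, ht, rfl⟩
      · rw [norm_smul, hnorm_u₁, mul_one, Real.norm_eq_abs, abs_of_nonpos ht] at hpnorm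
        exact ⟨t, ⟨by linarith, ht⟩, rfl⟩
      · have : t * s = 0 := by
          have h5 : (t • u₂) 1 = 0 := hpΓ
          rw [hu₂, smul_e2, e2_one] at h5
          exact h5
        have ht0 : t = 0 := by
          rcases mul_eq_zero.1 this with h | h
          · exact h
          · exact absurd h hs0.ne'
        refine ⟨0, ⟨by linarith, le_refl 0⟩, ?_⟩
        show (0:ℝ) • u₁ = t • u₂
        rw [ht0, zero_smul, zero_smul]
    · rintro ⟨t, ⟨htR, ht0⟩, rfl⟩
      refine ⟨⟨?_, ?_⟩, ?_⟩
      · rw [hE_eq]; exact Or.inl ⟨t, ht0, rfl⟩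
      · rw [hB, Metric.mem_closedBall, dist_zero_right, norm_smul, hnorm_u₁, mul_one,
          Real.norm_eq_abs, abs_of_nonpos ht0]
        linarith
      · show (t • u₁) 1 = 0
        rw [hu₁, smul_e2]; show t * 0 = 0; ring
  have hEBnΓ : (Dcone α ∩ B) \ Gamma2 = (fun t : ℝ => t • u₂) '' Ioc 0 R := by
    ext p
    simp only [mem_diff, mem_inter_iff, mem_image, mem_Ioc]
    constructor
    · rintro ⟨⟨hpE, hpB⟩, hpΓ⟩
      rw [hE_eq] at hpE
      have hpnorm : ‖p‖ ≤ R := by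
        have := Metric.mem_closedBall.1 hpB; rwa [dist_zero_right] at this
      rcases hpE with ⟨t, ht, rfl⟩ | ⟨t, ht, rfl⟩
      · exfalso
        apply hpΓ
        show (t • u₁) 1 = 0
        rw [hu₁, smul_e2]; show t * 0 = 0; ring
      · rw [norm_smul, hnorm_u₂, mul_one, Real.norm_eq_abs, abs_of_nonneg ht] at hpnorm
        have ht0 : 0 < t := by
          rcases lt_or_eq_of_le (mem_Ici.1 ht) with h | h
          · exact h
          · exfalso; apply hpΓ; show (t • u₂) 1 = 0; rw [← h, zero_smul]; rfl
        exact ⟨t, ⟨ht0, hpnorm⟩, rfl⟩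
    · rintro ⟨t, ⟨ht0, htR⟩, rfl⟩
      refine ⟨⟨?_, ?_⟩, ?_⟩
      · rw [hE_eq]; exact Or.inr ⟨t, ht0.le, rfl⟩
      · rw [hB, Metric.mem_closedBall, dist_zero_right, norm_smul, hnorm_u₂, mul_one,
          Real.norm_eq_abs, abs_of_pos ht0]
        exact htR
      · show ¬ (t • u₂) 1 = 0
        rw [hu₂, smul_e2]
        show ¬ t * s = 0
        exact mul_ne_zero ht0.ne' hs0.ne'
  have hJEB : slidingJ 2 1 α Gamma2 (Dcone α ∩ B) =
      ENNReal.ofReal R + ENNReal.ofReal α * ENNReal.ofReal R := by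
    unfold slidingJ
    rw [hEBnΓ, hEBΓ, measure_ray_image h1, measure_ray_image h1', Real.volume_Ioc,
      Real.volume_Icc]
    norm_num
  have hVIcc : volume (Icc (-(α * R)) R) = ENNReal.ofReal R + ENNReal.ofReal α * ENNReal.ofReal R := by
    rw [Real.volume_Icc, show R - -(α * R) = R + α * R by ring,
      ENNReal.ofReal_add hR0.le (mul_nonneg hα0.le hR0.le), ENNReal.ofReal_mul hα0.le]
  -- lower bound on J(F ∩ B)
  have hlow : ENNReal.ofReal R + ENNReal.ofReal α * ENNReal.ofReal R ≤
      slidingJ 2 1 α Gamma2 (F ∩ B) := by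
    have himg : ell '' (F ∩ B) ⊆ ell '' ((F ∩ B) \ Gamma2) ∪ ell '' (F ∩ B ∩ Gamma2) := by
      rw [← image_union, diff_union_inter]
    calc ENNReal.ofReal R + ENNReal.ofReal α * ENNReal.ofReal R
        = volume (Icc (-(α * R)) R) := hVIcc.symm
      _ = μH[(1:ℝ)] (Icc (-(α * R)) R) := by rw [hausdorffMeasure_real]
      _ ≤ μH[(1:ℝ)] (ell '' (F ∩ B)) := measure_mono hIccsub
      _ ≤ μH[(1:ℝ)] (ell '' ((F ∩ B) \ Gamma2)) + μH[(1:ℝ)] (ell '' (F ∩ B ∩ Gamma2)) :=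
          le_trans (measure_mono himg) (measure_union_le _ _)
      _ ≤ μH[(1:ℝ)] ((F ∩ B) \ Gamma2) + ENNReal.ofReal α * μH[(1:ℝ)] (F ∩ B ∩ Gamma2) := by
          apply add_le_add
          · simpa using hell_lip.hausdorffMeasure_image_le zero_le_one ((F ∩ B) \ Gamma2)
          · have := (hell_lipΓ (F ∩ B ∩ Gamma2) inter_subset_right).hausdorffMeasure_image_le
              zero_le_one
            rw [ENNReal.rpow_one] at this
            exact this
      _ = slidingJ 2 1 α Gamma2 (F ∩ B) := rfl
  -- additivity / subadditivity
  have hEBF : (Dcone α ∩ B) \ F = Dcone α \ F := by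
    apply Subset.antisymm
    · rintro x ⟨⟨hx1, _⟩, hx2⟩; exact ⟨hx1, hx2⟩
    · rintro x ⟨hx1, hx2⟩; exact ⟨⟨hx1, hKB (hEdiffF ⟨hx1, hx2⟩)⟩, hx2⟩
  have hsplit : slidingJ 2 1 α Gamma2 ((Dcone α ∩ B) ∩ F) +
      slidingJ 2 1 α Gamma2 (Dcone α \ F) = slidingJ 2 1 α Gamma2 (Dcone α ∩ B) := by
    rw [← hEBF]
    exact slidingJ_inter_add_diff _ hFmeas
  have hup : slidingJ 2 1 α Gamma2 (F ∩ B) ≤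
      slidingJ 2 1 α Gamma2 ((Dcone α ∩ B) ∩ F) + slidingJ 2 1 α Gamma2 (F \ Dcone α) := by
    refine le_trans (slidingJ_mono ?_) (slidingJ_union_le _ _)
    rintro y ⟨hyF, hyB⟩
    by_cases hyE : y ∈ Dcone α
    · exact Or.inl ⟨⟨hyE, hyB⟩, hyF⟩
    · exact Or.inr ⟨hyF, hyE⟩
  have hAfin : slidingJ 2 1 α Gamma2 ((Dcone α ∩ B) ∩ F) ≠ ⊤ := by
    have hle : slidingJ 2 1 α Gamma2 ((Dcone α ∩ B) ∩ F) ≤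
        slidingJ 2 1 α Gamma2 (Dcone α ∩ B) := slidingJ_mono inter_subset_left
    rw [hJEB] at hle
    exact ne_top_of_le_ne_top (by finiteness) hle
  have key : slidingJ 2 1 α Gamma2 ((Dcone α ∩ B) ∩ F) + slidingJ 2 1 α Gamma2 (Dcone α \ F) ≤
      slidingJ 2 1 α Gamma2 ((Dcone α ∩ B) ∩ F) + slidingJ 2 1 α Gamma2 (F \ Dcone α) := by
    calc slidingJ 2 1 α Gamma2 ((Dcone α ∩ B) ∩ F) + slidingJ 2 1 α Gamma2 (Dcone α \ F)
        = slidingJ 2 1 α Gamma2 (Dcone α ∩ B) := hsplit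
      _ = ENNReal.ofReal R + ENNReal.ofReal α * ENNReal.ofReal R := hJEB
      _ ≤ slidingJ 2 1 α Gamma2 (F ∩ B) := hlow
      _ ≤ _ := hup
  exact (ENNReal.add_le_add_iff_left hAfin).1 key
end
end
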